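/- In a median graph G with a fixed basepoint v₀, the map v ↦ ℰ⁻(v) assigning to each vertex the set of Θ-classes of its ingoing edges is a bijection from the vertex set V onto the set of all POFs of G; in particular, the number of POFs of G equals the number n of vertices, and for every POF X the unique vertex v_X with ℰ⁻(v_X) = X is the closest-to-v₀ vertex v such that X ⊆ ℰ⁻(v). -/

import Mathlib

namespace MedianPaper

variable {V : Type*}

/-- The metric interval `I(u,v)`: vertices on shortest `(u,v)`-paths. -/
def interval (G : SimpleGraph V) (u v : V) : Set V :=
  {w | G.dist u w + G.dist w v = G.dist u v}

/-- A median graph: a connected graph in which every triple of vertices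
has a unique median. -/
def MedianGraph (G : SimpleGraph V) : Prop :=
  G.Connected ∧ ∀ x y z : V, ∃! m : V,
    m ∈ interval G x y ∧ m ∈ interval G y z ∧ m ∈ interval G z x

/-- `u v x y` span a 4-cycle `u-v-y-x-u`, with opposite edge pairs
`(uv, xy)` and `(ux, vy)`. -/
def IsSquare (G : SimpleGraph V) (u v x y : V) : Prop :=
  G.Adj u v ∧ G.Adj x y ∧ G.Adj u x ∧ G.Adj v y ∧ u ≠ y ∧ v ≠ x

/-- Two edges are in relation Θ₀ if they are opposite edges of a common 4-cycle. -/
def Theta0 (G : SimpleGraph V) (e f : Sym2 V) : Prop :=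
  ∃ u v x y : V, IsSquare G u v x y ∧ e = s(u, v) ∧ f = s(x, y)

/-- Θ : the reflexive-transitive closure of Θ₀ on the edges of `G`. -/
def Theta (G : SimpleGraph V) (e f : Sym2 V) : Prop :=
  e ∈ G.edgeSet ∧ f ∈ G.edgeSet ∧ Relation.ReflTransGen (Theta0 G) e f

/-- The Θ-classes of `G`: equivalence classes of edges under Θ. -/
def ThetaClass (G : SimpleGraph V) (C : Set (Sym2 V)) : Prop :=
  ∃ e ∈ G.edgeSet, C = {f | Theta G e f}

/-- The edge set `C` separates `u` from `v` : they lie in different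
components of `G` minus `C`. -/
def Separates (G : SimpleGraph V) (C : Set (Sym2 V)) (u v : V) : Prop :=
  ¬ (G.deleteEdges C).Reachable u v

/-- The signature `σ_{u,v}`: Θ-classes separating `u` from `v`. -/
def signature (G : SimpleGraph V) (u v : V) : Set (Set (Sym2 V)) :=
  {C | ThetaClass G C ∧ Separates G C u v}

/-- `H`, `H'` are the two connected components (halfspaces) of `G` deprived
of the edges in `C`. -/
def IsHalfspacePair (G : SimpleGraph V) (C : Set (Sym2 V)) (H H' : Set V) : Prop :=
  H.Nonempty ∧ H'.Nonempty ∧ Disjoint H H' ∧ H ∪ H' = Set.univ ∧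
  (∀ x ∈ H, ∀ y ∈ H, (G.deleteEdges C).Reachable x y) ∧
  (∀ x ∈ H', ∀ y ∈ H', (G.deleteEdges C).Reachable x y) ∧
  (∀ x ∈ H, ∀ y ∈ H', ¬ (G.deleteEdges C).Reachable x y)

/-- The boundary of a halfspace `H` of the Θ-class `C` : vertices of `H`
incident to an edge of `C`. -/
def boundarySet (G : SimpleGraph V) (C : Set (Sym2 V)) (H : Set V) : Set V :=
  {x | x ∈ H ∧ ∃ y, G.Adj x y ∧ s(x, y) ∈ C}

/-- Orthogonality of Θ-classes: there is a common square using both. -/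
def Orthogonal (G : SimpleGraph V) (C₁ C₂ : Set (Sym2 V)) : Prop :=
  ∃ u v x y : V, IsSquare G u v x y ∧
    s(u, v) ∈ C₁ ∧ s(x, y) ∈ C₁ ∧ s(u, x) ∈ C₂ ∧ s(v, y) ∈ C₂

/-- A pairwise orthogonal family (POF) of Θ-classes. -/
def IsPOF (G : SimpleGraph V) (X : Set (Set (Sym2 V))) : Prop :=
  (∀ C ∈ X, ThetaClass G C) ∧
  ∀ C ∈ X, ∀ C' ∈ X, C ≠ C' → Orthogonal G C C'

/-- The `k`-dimensional hypercube graph, on subsets of `{1,…,k}`;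
two subsets are adjacent iff their symmetric difference has one element. -/
def cubeGraph (k : ℕ) : SimpleGraph (Finset (Fin k)) where
  Adj A B := (symmDiff A B).card = 1
  symm := by
    constructor
    intro A B h
    rwa [symmDiff_comm] at h
  loopless := by
    constructor
    intro A h
    simp [symmDiff_self] at h

/-- `S` induces a hypercube of dimension `k` in `G`. -/
def IsCubeDim (G : SimpleGraph V) (S : Set V) (k : ℕ) : Prop :=
  Nonempty ((G.induce S) ≃g cubeGraph k)

/-- `S` induces a hypercube in `G`. -/
def IsInducedCube (G : SimpleGraph V) (S : Set V) : Prop :=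
  ∃ k, IsCubeDim G S k

/-- The dimension of `G` is `d`: the largest dimension of an induced hypercube. -/
def GraphDim (G : SimpleGraph V) (d : ℕ) : Prop :=
  (∃ S : Set V, IsCubeDim G S d) ∧ ∀ (S : Set V) (k : ℕ), IsCubeDim G S k → k ≤ d

/-- The Θ-classes of the edges of the induced subgraph on `S`. -/
def cubeClasses (G : SimpleGraph V) (S : Set V) : Set (Set (Sym2 V)) :=
  {C | ThetaClass G C ∧ ∃ x ∈ S, ∃ y ∈ S, G.Adj x y ∧ s(x, y) ∈ C}

/-- With the `v₀`-orientation, `b ∈ S` is the basis of `S`: all edges of `S`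
incident to `b` are outgoing from `b`. -/
def IsBasis (G : SimpleGraph V) (v₀ : V) (S : Set V) (b : V) : Prop :=
  b ∈ S ∧ ∀ w ∈ S, G.Adj b w → G.dist v₀ b < G.dist v₀ w

/-- With the `v₀`-orientation, `b ∈ S` is the anti-basis of `S`: all edges of `S`
incident to `b` are ingoing to `b`. -/
def IsAntiBasis (G : SimpleGraph V) (v₀ : V) (S : Set V) (b : V) : Prop :=
  b ∈ S ∧ ∀ w ∈ S, G.Adj b w → G.dist v₀ w < G.dist v₀ b

/-- `ℰ⁻(v)` : the Θ-classes containing at least one edge ingoing to `v`. -/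
def inClasses (G : SimpleGraph V) (v₀ v : V) : Set (Set (Sym2 V)) :=
  {C | ThetaClass G C ∧ ∃ u, G.Adj u v ∧ G.dist v₀ u < G.dist v₀ v ∧ s(u, v) ∈ C}

/-- The ladder set `L_{u,v}`: classes of the signature `σ_{u,v}` having an
edge incident to `u`. -/
def ladder (G : SimpleGraph V) (u v : V) : Set (Set (Sym2 V)) :=
  {C | C ∈ signature G u v ∧ ∃ w, G.Adj u w ∧ s(u, w) ∈ C}

/-- A POF each of whose classes has an edge outgoing from `u`. -/
def OutgoingPOF (G : SimpleGraph V) (v₀ u : V) (L : Set (Set (Sym2 V))) : Prop :=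
  IsPOF G L ∧ ∀ C ∈ L, ∃ w, G.Adj u w ∧ G.dist v₀ u < G.dist v₀ w ∧ s(u, w) ∈ C

/-- A POF each of whose classes has an edge ingoing to `u`. -/
def IngoingPOF (G : SimpleGraph V) (v₀ u : V) (X : Set (Set (Sym2 V))) : Prop :=
  IsPOF G X ∧ ∀ C ∈ X, ∃ w, G.Adj w u ∧ G.dist v₀ w < G.dist v₀ u ∧ s(w, u) ∈ C

/-- `m` is a median of the triple `x, y, z`. -/
def IsMedian (G : SimpleGraph V) (x y z m : V) : Prop :=
  m ∈ interval G x y ∧ m ∈ interval G y z ∧ m ∈ interval G z x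

/-- `b` is the milestone following `a` on the way to `v`: `b` is the anti-basis of
the induced hypercube with basis `a` whose Θ-classes are the ladder set `L_{a,v}`. -/
def NextMilestone (G : SimpleGraph V) (v₀ v a b : V) : Prop :=
  ∃ S : Set V, IsInducedCube G S ∧ IsBasis G v₀ S a ∧ IsAntiBasis G v₀ S b ∧
    cubeClasses G S = ladder G a v

/-- The milestone set `Π(u,v)`: vertices obtained from `u` by iterating the
next-milestone step towards `v`. -/
def MilestoneSet (G : SimpleGraph V) (v₀ u v : V) : Set V :=
  {p | Relation.ReflTransGen (fun a b => NextMilestone G v₀ v a b) u p}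

/-- The penultimate milestone `π̄(u,v)`: the milestone of `Π(u,v)` other than `v`
closest to `v`, i.e. whose next milestone is `v` itself. -/
def IsPenultimate (G : SimpleGraph V) (v₀ u v p : V) : Prop :=
  p ∈ MilestoneSet G v₀ u v ∧ p ≠ v ∧ NextMilestone G v₀ v p v

/-- A convex set of vertices. -/
def ConvexSet (G : SimpleGraph V) (H : Set V) : Prop :=
  ∀ u ∈ H, ∀ v ∈ H, interval G u v ⊆ H

/-- A gated set of vertices: each vertex has a gate in `H`. -/
def GatedSet (G : SimpleGraph V) (H : Set V) : Prop :=
  ∀ x : V, ∃ g ∈ H, ∀ h ∈ H, g ∈ interval G x h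



section Aux

set_option linter.unusedSectionVars false

open SimpleGraph

variable {V : Type*} [Fintype V] {G : SimpleGraph V}

lemma MedianGraph.conn (h : MedianGraph G) : G.Connected := h.1

lemma mem_interval_iff {u v w : V} :
    w ∈ interval G u v ↔ G.dist u w + G.dist w v = G.dist u v := Iff.rfl

lemma adj_dist_one {u v : V} (h : G.Adj u v) : G.dist u v = 1 :=
  (SimpleGraph.dist_eq_one_iff_adj).2 h

lemma dist_zero_eq (hc : G.Connected) {u v : V} (h : G.dist u v = 0) : u = v :=
  (hc.dist_eq_zero_iff).1 h

/-- neighbor on a geodesic -/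
lemma exists_adj_dist (hc : G.Connected) {u v : V} {n : ℕ} (h : G.dist u v = n + 1) :
    ∃ w, G.Adj u w ∧ G.dist w v = n := by
  obtain ⟨p, hp⟩ := (hc u v).exists_walk_length_eq_dist
  rw [h] at hp
  cases p with
  | nil => simp at hp
  | @cons _ w _ hadj q =>
    refine ⟨w, hadj, le_antisymm ?_ ?_⟩
    · calc G.dist w v ≤ q.length := SimpleGraph.dist_le q
      _ = n := by simpa using hp
    · have ht := hc.dist_triangle (u := u) (v := w) (w := v)
      have h1 : G.dist u w = 1 := adj_dist_one hadj
      omega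
  
/-- the median of a triple, existence -/
lemma median_exists (hmed : MedianGraph G) (x y z : V) :
    ∃ m : V, m ∈ interval G x y ∧ m ∈ interval G y z ∧ m ∈ interval G z x :=
  (hmed.2 x y z).exists

lemma median_unique (hmed : MedianGraph G) {x y z m m' : V}
    (h : m ∈ interval G x y ∧ m ∈ interval G y z ∧ m ∈ interval G z x)
    (h' : m' ∈ interval G x y ∧ m' ∈ interval G y z ∧ m' ∈ interval G z x) : m = m' :=
  (hmed.2 x y z).unique h h'

/-- no vertex is equidistant from the two ends of an edge -/
lemma no_equidist (hmed : MedianGraph G) {a b : V} (hab : G.Adj a b) (w : V) :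
    G.dist w a ≠ G.dist w b := by
  intro heq
  have hc := hmed.conn
  obtain ⟨m, h1, h2, h3⟩ := median_exists hmed a b w
  rw [mem_interval_iff] at h1 h2 h3
  have hd : G.dist a b = 1 := adj_dist_one hab
  have hwa : G.dist w a = G.dist a w := SimpleGraph.dist_comm
  have hwb : G.dist w b = G.dist b w := SimpleGraph.dist_comm
  have hd2 : G.dist b a = 1 := adj_dist_one hab.symm
  have ham : G.dist a m = 0 ∨ G.dist m b = 0 := by omega
  rcases ham with h0 | h0
  · have hma : a = m := dist_zero_eq hc h0
    subst hma
    omega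
  · have hmb : m = b := dist_zero_eq hc h0
    subst hmb
    omega

/-- distances to the ends of an edge differ by exactly one -/
lemma adj_dist_cases (hmed : MedianGraph G) {a b : V} (hab : G.Adj a b) (w : V) :
    G.dist w a = G.dist w b + 1 ∨ G.dist w b = G.dist w a + 1 := by
  have hc := hmed.conn
  have h1 := hc.dist_triangle (u := w) (v := a) (w := b)
  have h2 := hc.dist_triangle (u := w) (v := b) (w := a)
  have hd : G.dist a b = 1 := adj_dist_one hab
  have hd' : G.dist b a = 1 := adj_dist_one hab.symm
  have := no_equidist hmed hab w
  omega

/-- interval composition -/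
lemma interval_trans (hc : G.Connected) {x y z t : V}
    (hy : y ∈ interval G x z) (ht : t ∈ interval G x y) : t ∈ interval G x z := by
  rw [mem_interval_iff] at *
  have h1 := hc.dist_triangle (u := t) (v := y) (w := z)
  have h2 := hc.dist_triangle (u := x) (v := t) (w := z)
  omega

lemma interval_left (hc : G.Connected) (x z : V) : x ∈ interval G x z := by
  rw [mem_interval_iff]; simp

lemma interval_right (hc : G.Connected) (x z : V) : z ∈ interval G x z := by
  rw [mem_interval_iff]; simp

lemma interval_comm {x z w : V} (h : w ∈ interval G x z) : w ∈ interval G z x := by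
  rw [mem_interval_iff] at *
  have e1 : G.dist z w = G.dist w z := SimpleGraph.dist_comm
  have e2 : G.dist w x = G.dist x w := SimpleGraph.dist_comm
  have e3 : G.dist z x = G.dist x z := SimpleGraph.dist_comm
  omega

/-- squares can be re-oriented -/
lemma IsSquare.flip {u v x y : V} (h : IsSquare G u v x y) : IsSquare G x y u v :=
  ⟨h.2.1, h.1, h.2.2.1.symm, h.2.2.2.1.symm, Ne.symm h.2.2.2.2.2, Ne.symm h.2.2.2.2.1⟩

lemma IsSquare.sides {u v x y : V} (h : IsSquare G u v x y) : IsSquare G u x v y :=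
  ⟨h.2.2.1, h.2.2.2.1, h.1, h.2.1, h.2.2.2.2.1, Ne.symm h.2.2.2.2.2⟩

lemma IsSquare.rev {u v x y : V} (h : IsSquare G u v x y) : IsSquare G v u y x :=
  ⟨h.1.symm, h.2.1.symm, h.2.2.2.1, h.2.2.1, h.2.2.2.2.2, h.2.2.2.2.1⟩

lemma square_cut_aux (hmed : MedianGraph G) {u v x y : V} (h : IsSquare G u v x y)
    (w : V) (hw : G.dist w u < G.dist w v) : G.dist w x < G.dist w y := by
  obtain ⟨huv, hxy, hux, hvy, huy, hvx⟩ := h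
  have hc := hmed.conn
  by_contra hcon
  have c1 := adj_dist_cases hmed huv w
  have c2 := adj_dist_cases hmed hxy w
  have c3 := adj_dist_cases hmed hux w
  have c4 := adj_dist_cases hmed hvy w
  -- derive the distance pattern
  have hxw : G.dist w x = G.dist w u + 1 := by omega
  have hyw : G.dist w y = G.dist w u := by omega
  -- d v x = 2
  have hnadj : ¬ G.Adj v x := by
    intro hvx'
    exact no_equidist hmed hvx' u (by
      have e1 : G.dist u v = 1 := adj_dist_one huv
      have e2 : G.dist u x = 1 := adj_dist_one hux
      omega)
  have hdvx : G.dist v x = 2 := by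
    have ht := hc.dist_triangle (u := v) (v := u) (w := x)
    have h1 : G.dist v u = 1 := adj_dist_one huv.symm
    have h2 : G.dist u x = 1 := adj_dist_one hux
    have hne1 : G.dist v x ≠ 1 := fun hh => hnadj (SimpleGraph.dist_eq_one_iff_adj.1 hh)
    have hne0 : G.dist v x ≠ 0 := fun h0 => hvx (dist_zero_eq hc h0)
    omega
  have evu : G.dist v u = 1 := adj_dist_one huv.symm
  have eux : G.dist u x = 1 := adj_dist_one hux
  have exu : G.dist x u = 1 := adj_dist_one hux.symm
  have euw : G.dist u w = G.dist w u := SimpleGraph.dist_comm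
  have exw : G.dist x w = G.dist w x := SimpleGraph.dist_comm
  have ewv : G.dist w v = G.dist w v := rfl
  have evy : G.dist v y = 1 := adj_dist_one hvy
  have eyx : G.dist y x = 1 := adj_dist_one hxy.symm
  have exy : G.dist x y = 1 := adj_dist_one hxy
  have eyw : G.dist y w = G.dist w y := SimpleGraph.dist_comm
  have eyv : G.dist y v = 1 := adj_dist_one hvy.symm
  have euv : G.dist u v = 1 := adj_dist_one huv
  have hmu : u ∈ interval G v x ∧ u ∈ interval G x w ∧ u ∈ interval G w v := by
    refine ⟨?_, ?_, ?_⟩ <;> rw [mem_interval_iff] <;> omega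
  have hmy : y ∈ interval G v x ∧ y ∈ interval G x w ∧ y ∈ interval G w v := by
    refine ⟨?_, ?_, ?_⟩ <;> rw [mem_interval_iff] <;> omega
  exact huy (median_unique hmed hmu hmy)

lemma square_cut (hmed : MedianGraph G) {u v x y : V} (h : IsSquare G u v x y) (w : V) :
    (G.dist w u < G.dist w v ↔ G.dist w x < G.dist w y) :=
  ⟨square_cut_aux hmed h w, square_cut_aux hmed h.flip w⟩


/-- halfspace determined by an (oriented) edge -/
def Wset (G : SimpleGraph V) (a b : V) : Set V := {w | G.dist w a < G.dist w b}

lemma mem_Wset_iff {a b w : V} : w ∈ Wset G a b ↔ G.dist w a < G.dist w b := Iff.rfl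

lemma left_mem_Wset (hc : G.Connected) {a b : V} (hab : G.Adj a b) : a ∈ Wset G a b := by
  rw [mem_Wset_iff]
  have h1 : G.dist a a = 0 := SimpleGraph.dist_self
  have h2 : G.dist a b = 1 := adj_dist_one hab
  omega

lemma not_mem_Wset_iff (hmed : MedianGraph G) {a b : V} (hab : G.Adj a b) (w : V) :
    w ∉ Wset G a b ↔ w ∈ Wset G b a := by
  have := adj_dist_cases hmed hab w
  simp only [mem_Wset_iff]
  omega

lemma square_cut_Wset (hmed : MedianGraph G) {u v x y : V} (h : IsSquare G u v x y) :
    Wset G u v = Wset G x y := Set.ext fun w => square_cut hmed h w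

/-- the final square contradiction inside the convexity proof -/
lemma convex_core (hmed : MedianGraph G) {a b x z t u : V}
    (hab : G.Adj a b) (hadjxt : G.Adj x t) (hadjxu : G.Adj x u)
    (hconvuz : interval G u z ⊆ Wset G a b)
    (hta : G.dist t a = G.dist x a + 1) (htb : G.dist t b = G.dist x a)
    (hua : G.dist u a + 1 = G.dist x a) (hub : G.dist u b = G.dist x a)
    (hut : G.dist u t = 2) (hxp : G.dist x b = G.dist x a + 1)
    (hdtz : G.dist t z = G.dist u z)
    (hdxz : G.dist x z = G.dist u z + 1) : False := by
  have hc := hmed.conn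
  obtain ⟨R, hR1, hR2, hR3⟩ := median_exists hmed u z t
  rw [mem_interval_iff] at hR1 hR2 hR3
  have hRW : R ∈ Wset G a b := hconvuz (by rw [mem_interval_iff]; exact hR1)
  rw [mem_Wset_iff] at hRW
  have ctu : G.dist t u = G.dist u t := SimpleGraph.dist_comm
  have czt : G.dist z t = G.dist t z := SimpleGraph.dist_comm
  have czu : G.dist z u = G.dist u z := SimpleGraph.dist_comm
  have czx : G.dist z x = G.dist x z := SimpleGraph.dist_comm
  have hxt : G.dist x t = 1 := adj_dist_one hadjxt
  have hRt_ne : R ≠ t := by intro he; rw [he] at hRW; omega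
  have hRu_ne : R ≠ u := by intro he; rw [he] at hR2; omega
  have hRtne0 : G.dist t R ≠ 0 := fun h0 => hRt_ne (dist_zero_eq hc h0).symm
  have hRune0 : G.dist R u ≠ 0 := fun h0 => hRu_ne (dist_zero_eq hc h0)
  have hRu : G.dist R u = 1 := by omega
  have htR : G.dist t R = 1 := by omega
  have hadjRu : G.Adj R u := SimpleGraph.dist_eq_one_iff_adj.1 hRu
  have hadjtR : G.Adj t R := SimpleGraph.dist_eq_one_iff_adj.1 htR
  have hRx_ne : R ≠ x := by intro he; rw [he] at hR2; omega
  have hut_ne : u ≠ t := by intro he; rw [he] at hua hub; omega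
  have hsq : IsSquare G x t u R :=
    ⟨hadjxt, hadjRu.symm, hadjxu, hadjtR, Ne.symm hRx_ne, Ne.symm hut_ne⟩
  have sq_a := (square_cut hmed hsq a).1
  have sq_b := (square_cut hmed hsq b).2
  have cax : G.dist a x = G.dist x a := SimpleGraph.dist_comm
  have cat : G.dist a t = G.dist t a := SimpleGraph.dist_comm
  have cau : G.dist a u = G.dist u a := SimpleGraph.dist_comm
  have caR : G.dist a R = G.dist R a := SimpleGraph.dist_comm
  have cbx : G.dist b x = G.dist x b := SimpleGraph.dist_comm
  have cbt : G.dist b t = G.dist t b := SimpleGraph.dist_comm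
  have cbu : G.dist b u = G.dist u b := SimpleGraph.dist_comm
  have cbR : G.dist b R = G.dist R b := SimpleGraph.dist_comm
  have sqa : G.dist a u < G.dist a R := sq_a (by omega)
  have sqb : ¬ G.dist b u < G.dist b R := fun hh => by
    have := sq_b hh; omega
  have cRa := adj_dist_cases hmed hadjRu a
  have cRb := adj_dist_cases hmed hadjRu b
  omega

set_option maxHeartbeats 1600000 in
/-- Halfspaces are convex (the key geometric lemma). -/
lemma wset_convex (hmed : MedianGraph G) : ∀ n : ℕ, ∀ a b x z : V, G.Adj a b →
    x ∈ Wset G a b → z ∈ Wset G a b → G.dist x z = n → interval G x z ⊆ Wset G a b := by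
  have hc := hmed.conn
  intro n
  induction n using Nat.strong_induction_on with
  | _ n IH =>
  intro a b x z hab hx hz hn w hw
  rw [mem_interval_iff] at hw
  by_cases hwz : w = z
  · subst hwz; exact hz
  have hwz0 : G.dist w z ≠ 0 := fun h0 => hwz (dist_zero_eq hc h0)
  have hzw : G.dist z w = G.dist w z := SimpleGraph.dist_comm
  obtain ⟨z₁, hzz1, hz1w⟩ := exists_adj_dist hc (u := z) (v := w) (n := G.dist w z - 1)
    (by omega)
  have hz1z : G.dist z₁ z = 1 := adj_dist_one hzz1.symm
  have hzz1d : G.dist z z₁ = 1 := adj_dist_one hzz1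
  have hwz1 : G.dist w z₁ = G.dist z₁ w := SimpleGraph.dist_comm
  have txz1 : G.dist x z₁ ≤ G.dist x w + G.dist w z₁ := hc.dist_triangle
  have txz : G.dist x z ≤ G.dist x z₁ + G.dist z₁ z := hc.dist_triangle
  have hxz1 : G.dist x z₁ + 1 = n := by omega
  have hwmem : G.dist x w + G.dist w z₁ = G.dist x z₁ := by omega
  have hz1mem : z₁ ∈ interval G x z := by rw [mem_interval_iff]; omega
  by_cases hz1 : z₁ ∈ Wset G a b
  · exact IH (G.dist x z₁) (by omega) a b x z₁ hab hx hz1 rfl (by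
      rw [mem_interval_iff]; exact hwmem)
  -- z₁ is on the wrong side; derive a contradiction
  exfalso
  clear hw txz1 txz hwmem hwz0 hzw hz1w hwz1 hwz
  rw [mem_Wset_iff] at hx hz
  have hxp : G.dist x b = G.dist x a + 1 := by have := adj_dist_cases hmed hab x; omega
  have hzr : G.dist z b = G.dist z a + 1 := by have := adj_dist_cases hmed hab z; omega
  have hz1ab : ¬ G.dist z₁ a < G.dist z₁ b := fun hh => hz1 hh
  have cza := adj_dist_cases hmed (G := G) hzz1 a
  have czb := adj_dist_cases hmed (G := G) hzz1 b
  have az : G.dist a z = G.dist z a := SimpleGraph.dist_comm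
  have az1 : G.dist a z₁ = G.dist z₁ a := SimpleGraph.dist_comm
  have bz : G.dist b z = G.dist z b := SimpleGraph.dist_comm
  have bz1 : G.dist b z₁ = G.dist z₁ b := SimpleGraph.dist_comm
  have ez1a : G.dist z₁ a = G.dist z a + 1 := by omega
  have ez1b : G.dist z₁ b = G.dist z a := by omega
  clear cza czb hz1ab az bz
  -- first median: κ = m(x, z₁, a)
  obtain ⟨k, hk1, hk2, hk3⟩ := median_exists hmed x z₁ a
  rw [mem_interval_iff] at hk1 hk2 hk3
  have ckx : G.dist k x = G.dist x k := SimpleGraph.dist_comm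
  have cka : G.dist a k = G.dist k a := SimpleGraph.dist_comm
  have cxa : G.dist a x = G.dist x a := SimpleGraph.dist_comm
  have ckz1 : G.dist z₁ k = G.dist k z₁ := SimpleGraph.dist_comm
  have tkb : G.dist x b ≤ G.dist x k + G.dist k b := hc.dist_triangle
  have hkW : k ∈ Wset G a b := by rw [mem_Wset_iff]; omega
  have hkz1 : G.dist k z₁ ≠ 0 := by
    intro h0
    have : k = z₁ := dist_zero_eq hc h0
    subst this
    exact hz1 hkW
  by_cases hxk : G.dist x k = 0
  · -- κ = x : deep case
    have hkx : x = k := dist_zero_eq hc hxk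
    subst hkx
    have hr : G.dist z a + 1 = G.dist x z₁ + G.dist x a := by omega
    clear hk1 hk2 hk3 ckx cka ckz1 tkb hkW hkz1 hxk
    -- second median: τ = m(x, z₁, b)
    obtain ⟨t, ht1, ht2, ht3⟩ := median_exists hmed x z₁ b
    rw [mem_interval_iff] at ht1 ht2 ht3
    have ctx : G.dist t x = G.dist x t := SimpleGraph.dist_comm
    have ctb : G.dist b t = G.dist t b := SimpleGraph.dist_comm
    have cxb : G.dist b x = G.dist x b := SimpleGraph.dist_comm
    have ctz1 : G.dist z₁ t = G.dist t z₁ := SimpleGraph.dist_comm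
    have hxt : G.dist x t = 1 := by omega
    have hadjxt : G.Adj x t := SimpleGraph.dist_eq_one_iff_adj.1 hxt
    have htb : G.dist t b = G.dist x a := by omega
    have htz1 : G.dist t z₁ + 1 = G.dist x z₁ := by omega
    have htmem : t ∈ interval G x z := interval_trans hc hz1mem (by
      rw [mem_interval_iff]; omega)
    rw [mem_interval_iff] at htmem
    have htz : G.dist t z + 1 = n := by omega
    by_cases htW : t ∈ Wset G a b
    · exact hz1 (IH (G.dist t z) (by omega) a b t z hab htW hz rfl (by
        rw [mem_interval_iff]; omega))
    have hta : G.dist t a = G.dist x a + 1 := by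
      have := adj_dist_cases hmed hab t
      rw [mem_Wset_iff] at htW
      omega
    clear ht1 ht2 ht3 ctx ctb cxb ctz1 htW
    -- third median: μ = m(x, z, a)
    obtain ⟨u, hu1, hu2, hu3⟩ := median_exists hmed x z a
    rw [mem_interval_iff] at hu1 hu2 hu3
    have cux : G.dist u x = G.dist x u := SimpleGraph.dist_comm
    have cua : G.dist a u = G.dist u a := SimpleGraph.dist_comm
    have cuz : G.dist z u = G.dist u z := SimpleGraph.dist_comm
    have cxa2 : G.dist a x = G.dist x a := SimpleGraph.dist_comm
    have hxu : G.dist x u = 1 := by omega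
    have hadjxu : G.Adj x u := SimpleGraph.dist_eq_one_iff_adj.1 hxu
    have hua : G.dist u a + 1 = G.dist x a := by omega
    have huz : G.dist u z + 1 = n := by omega
    have hdab : G.dist a b = 1 := adj_dist_one hab
    have tub1 : G.dist u b ≤ G.dist u a + G.dist a b := hc.dist_triangle
    have tub2 : G.dist x b ≤ G.dist x u + G.dist u b := hc.dist_triangle
    have hub : G.dist u b = G.dist x a := by omega
    have huW : u ∈ Wset G a b := by rw [mem_Wset_iff]; omega
    have hut_ne : u ≠ t := by
      intro he; rw [he] at hua; omega
    have tut : G.dist u t ≤ G.dist u x + G.dist x t := hc.dist_triangle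
    have hutne1 : G.dist u t ≠ 1 := by
      intro h1
      exact no_equidist hmed (SimpleGraph.dist_eq_one_iff_adj.1 h1) x (by omega)
    have hutne0 : G.dist u t ≠ 0 := fun h0 => hut_ne (dist_zero_eq hc h0)
    have hut : G.dist u t = 2 := by omega
    exact convex_core hmed hab hadjxt hadjxu
      (IH (G.dist u z) (by omega) a b u z hab huW hz rfl)
      hta htb hua hub hut hxp (by omega) (by omega)
  · -- κ ≠ x : use induction on the pair (κ, z)
    have hkmem : k ∈ interval G x z := interval_trans hc hz1mem (by
      rw [mem_interval_iff]; exact hk1)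
    rw [mem_interval_iff] at hkmem
    exact hz1 (IH (G.dist k z) (by omega) a b k z hab hkW hz rfl (by
      rw [mem_interval_iff]; omega))


lemma rtg_symm {α : Type*} {r : α → α → Prop} (hr : ∀ a b, r a b → r b a) {a b : α}
    (h : Relation.ReflTransGen r a b) : Relation.ReflTransGen r b a := by
  induction h with
  | refl => exact .refl
  | tail _ hbc ih => exact Relation.ReflTransGen.head (hr _ _ hbc) ih

lemma theta0_symm {e f : Sym2 V} (h : Theta0 G e f) : Theta0 G f e := by
  obtain ⟨u, v, x, y, hsq, he, hf⟩ := h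
  exact ⟨x, y, u, v, hsq.flip, hf, he⟩

lemma theta_refl {e : Sym2 V} (he : e ∈ G.edgeSet) : Theta G e e := ⟨he, he, .refl⟩

lemma theta_symm {e f : Sym2 V} (h : Theta G e f) : Theta G f e :=
  ⟨h.2.1, h.1, rtg_symm (fun _ _ => theta0_symm) h.2.2⟩

lemma theta_trans {e f g : Sym2 V} (h : Theta G e f) (h' : Theta G f g) : Theta G e g :=
  ⟨h.1, h'.2.1, h.2.2.trans h'.2.2⟩

lemma class_edges {C : Set (Sym2 V)} (hC : ThetaClass G C) {f : Sym2 V} (hf : f ∈ C) :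
    f ∈ G.edgeSet := by
  obtain ⟨e, he, rfl⟩ := hC
  exact hf.2.1

lemma class_theta {C : Set (Sym2 V)} (hC : ThetaClass G C) {f g : Sym2 V} (hf : f ∈ C)
    (hg : g ∈ C) : Theta G f g := by
  obtain ⟨e, he, rfl⟩ := hC
  exact theta_trans (theta_symm hf) hg

lemma class_mem_of_theta {C : Set (Sym2 V)} (hC : ThetaClass G C) {f g : Sym2 V} (hf : f ∈ C)
    (hg : Theta G f g) : g ∈ C := by
  obtain ⟨e, he, rfl⟩ := hC
  exact theta_trans hf hg

lemma theta_class_eq {C C' : Set (Sym2 V)} (hC : ThetaClass G C) (hC' : ThetaClass G C')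
    {g : Sym2 V} (hg : g ∈ C) (hg' : g ∈ C') : C = C' := by
  obtain ⟨e, he, rfl⟩ := hC
  obtain ⟨e', he', rfl⟩ := hC'
  ext f
  exact ⟨fun hf => theta_trans hg' (theta_trans (theta_symm hg) hf),
    fun hf => theta_trans hg (theta_trans (theta_symm hg') hf)⟩

lemma edge_class {e : Sym2 V} (he : e ∈ G.edgeSet) :
    ThetaClass G {f | Theta G e f} ∧ e ∈ {f | Theta G e f} :=
  ⟨⟨e, he, rfl⟩, theta_refl he⟩

lemma class_closed_theta0 {C : Set (Sym2 V)} (hC : ThetaClass G C) {f g : Sym2 V}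
    (hf : f ∈ C) (h0 : Theta0 G f g) (hg : g ∈ G.edgeSet) : g ∈ C :=
  class_mem_of_theta hC hf ⟨class_edges hC hf, hg, Relation.ReflTransGen.single h0⟩

lemma class_nonempty {C : Set (Sym2 V)} (hC : ThetaClass G C) :
    ∃ u v : V, G.Adj u v ∧ s(u, v) ∈ C := by
  obtain ⟨e, he, rfl⟩ := hC
  obtain ⟨⟨u, v⟩, hp⟩ := Quot.exists_rep e
  have heq : e = s(u, v) := hp.symm
  subst heq
  exact ⟨u, v, he, theta_refl he⟩

/-- Θ-related edges induce the same (unordered) halfspace pair. -/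
lemma rtg_wset (hmed : MedianGraph G) {e f : Sym2 V}
    (h : Relation.ReflTransGen (Theta0 G) e f) :
    ∀ u v x y : V, e = s(u, v) → f = s(x, y) →
      Wset G u v = Wset G x y ∨ Wset G u v = Wset G y x := by
  induction h with
  | refl =>
    intro u v x y h1 h2
    rw [h1] at h2
    rw [Sym2.eq_iff] at h2
    rcases h2 with ⟨rfl, rfl⟩ | ⟨rfl, rfl⟩
    · exact Or.inl rfl
    · exact Or.inr rfl
  | tail _ hbc ih =>
    intro u v x y h1 h2
    obtain ⟨p, q, r, s', hsq, hb, hc'⟩ := hbc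
    have h3 := ih u v p q h1 hb
    have w1 : Wset G p q = Wset G r s' := square_cut_Wset hmed hsq
    have w2 : Wset G q p = Wset G s' r := square_cut_Wset hmed hsq.rev
    rw [hc'] at h2
    rw [Sym2.eq_iff] at h2
    rcases h2 with ⟨rfl, rfl⟩ | ⟨rfl, rfl⟩
    · rcases h3 with h3 | h3
      · exact Or.inl (h3.trans w1)
      · exact Or.inr (h3.trans w2)
    · rcases h3 with h3 | h3
      · exact Or.inr (h3.trans w1)
      · exact Or.inl (h3.trans w2)

lemma theta_wset (hmed : MedianGraph G) {e f : Sym2 V} (h : Theta G e f) :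
    ∀ u v x y : V, e = s(u, v) → f = s(x, y) →
      Wset G u v = Wset G x y ∨ Wset G u v = Wset G y x :=
  rtg_wset hmed h.2.2

open scoped Classical in
noncomputable def Hside (G : SimpleGraph V) (v₀ : V) (C : Set (Sym2 V)) : Set V :=
  if h : ∃ p : V × V, G.Adj p.1 p.2 ∧ s(p.1, p.2) ∈ C ∧ G.dist v₀ p.1 < G.dist v₀ p.2
  then Wset G h.choose.1 h.choose.2 else ∅

lemma Hside_spec (hmed : MedianGraph G) (v₀ : V) {C : Set (Sym2 V)} (hC : ThetaClass G C)
    {u v : V} (huv : G.Adj u v) (hm : s(u, v) ∈ C) (hlt : G.dist v₀ u < G.dist v₀ v) :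
    Wset G u v = Hside G v₀ C := by
  have hex : ∃ p : V × V, G.Adj p.1 p.2 ∧ s(p.1, p.2) ∈ C ∧ G.dist v₀ p.1 < G.dist v₀ p.2 :=
    ⟨(u, v), huv, hm, hlt⟩
  classical
  simp only [Hside]
  rw [dif_pos hex]
  obtain ⟨hadj', hm', hlt'⟩ := hex.choose_spec
  have ht : Theta G s(u, v) s(hex.choose.1, hex.choose.2) := class_theta hC hm hm'
  rcases theta_wset hmed ht u v hex.choose.1 hex.choose.2 rfl rfl with hw | hw
  · exact hw
  · exfalso
    have h1 : v₀ ∈ Wset G u v := hlt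
    rw [hw] at h1
    have h2 : G.dist v₀ hex.choose.2 < G.dist v₀ hex.choose.1 := h1
    omega

/-- every Θ-class has an edge oriented away from the basepoint -/
lemma class_oriented_edge (hmed : MedianGraph G) (v₀ : V) {C : Set (Sym2 V)}
    (hC : ThetaClass G C) :
    ∃ u v : V, G.Adj u v ∧ s(u, v) ∈ C ∧ G.dist v₀ u < G.dist v₀ v := by
  obtain ⟨u, v, huv, hm⟩ := class_nonempty hC
  rcases adj_dist_cases hmed huv v₀ with hh | hh
  · exact ⟨v, u, huv.symm, by rwa [Sym2.eq_swap], by omega⟩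
  · exact ⟨u, v, huv, hm, by omega⟩

lemma Hside_base (hmed : MedianGraph G) (v₀ : V) {C : Set (Sym2 V)} (hC : ThetaClass G C) :
    v₀ ∈ Hside G v₀ C := by
  obtain ⟨u, v, huv, hm, hlt⟩ := class_oriented_edge hmed v₀ hC
  rw [← Hside_spec hmed v₀ hC huv hm hlt]
  exact hlt

/-- for an edge of `C`, the endpoint in `Hside` is the one closer to `v₀`,
and the other endpoint is outside `Hside`. -/
lemma edge_side (hmed : MedianGraph G) (v₀ : V) {C : Set (Sym2 V)} (hC : ThetaClass G C)
    {u v : V} (huv : G.Adj u v) (hm : s(u, v) ∈ C) (hu : u ∈ Hside G v₀ C) :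
    G.dist v₀ u < G.dist v₀ v ∧ v ∉ Hside G v₀ C := by
  rcases adj_dist_cases hmed huv v₀ with hh | hh
  · exfalso
    have hspec := Hside_spec hmed v₀ hC huv.symm (by rwa [Sym2.eq_swap]) (by omega)
    rw [← hspec, mem_Wset_iff] at hu
    have h1 : G.dist u v = 1 := adj_dist_one huv
    have h0 : G.dist u u = 0 := SimpleGraph.dist_self
    omega
  · have hspec := Hside_spec hmed v₀ hC huv hm (by omega)
    constructor
    · omega
    · rw [← hspec, mem_Wset_iff]
      have h1 : G.dist v u = 1 := adj_dist_one huv.symm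
      have h0 : G.dist v v = 0 := SimpleGraph.dist_self
      omega

/-- conversely, the closer endpoint of an edge of `C` is in `Hside` -/
lemma edge_side' (hmed : MedianGraph G) (v₀ : V) {C : Set (Sym2 V)} (hC : ThetaClass G C)
    {u v : V} (huv : G.Adj u v) (hm : s(u, v) ∈ C) (hlt : G.dist v₀ u < G.dist v₀ v) :
    u ∈ Hside G v₀ C ∧ v ∉ Hside G v₀ C := by
  have hspec := Hside_spec hmed v₀ hC huv hm hlt
  have h1 : G.dist u v = 1 := adj_dist_one huv
  have h1' : G.dist v u = 1 := adj_dist_one huv.symm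
  have h0 : G.dist u u = 0 := SimpleGraph.dist_self
  have h0' : G.dist v v = 0 := SimpleGraph.dist_self
  constructor
  · rw [← hspec, mem_Wset_iff]; omega
  · rw [← hspec, mem_Wset_iff]; omega

lemma Hside_convex (hmed : MedianGraph G) (v₀ : V) {C : Set (Sym2 V)} (hC : ThetaClass G C) :
    ConvexSet G (Hside G v₀ C) := by
  obtain ⟨u, v, huv, hm, hlt⟩ := class_oriented_edge hmed v₀ hC
  rw [← Hside_spec hmed v₀ hC huv hm hlt]
  exact fun x hx z hz => wset_convex hmed _ u v x z huv hx hz rfl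

lemma Hside_compl_convex (hmed : MedianGraph G) (v₀ : V) {C : Set (Sym2 V)}
    (hC : ThetaClass G C) : ConvexSet G (Hside G v₀ C)ᶜ := by
  obtain ⟨u, v, huv, hm, hlt⟩ := class_oriented_edge hmed v₀ hC
  rw [← Hside_spec hmed v₀ hC huv hm hlt]
  have hcompl : (Wset G u v)ᶜ = Wset G v u := by
    ext w
    have := not_mem_Wset_iff hmed huv w
    simp only [Set.mem_compl_iff]
    tauto
  rw [hcompl]
  exact fun x hx z hz => wset_convex hmed _ v u x z huv.symm hx hz rfl

lemma convex_inter {A B : Set V} (hA : ConvexSet G A) (hB : ConvexSet G B) :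
    ConvexSet G (A ∩ B) := fun x hx z hz w hw =>
  ⟨hA x hx.1 z hz.1 hw, hB x hx.2 z hz.2 hw⟩

lemma convex_univ : ConvexSet G (Set.univ : Set V) := fun _ _ _ _ _ _ => trivial


lemma Hside_compl_Wset (hmed : MedianGraph G) {u v : V} (huv : G.Adj u v) :
    (Wset G u v)ᶜ = Wset G v u := by
  ext w
  have := not_mem_Wset_iff hmed huv w
  simp only [Set.mem_compl_iff]
  tauto

/-- hard direction: every edge crossing the cut of `C` belongs to `C` (ladder lemma) -/
lemma cross_edge_mem (hmed : MedianGraph G) (v₀ : V) {C : Set (Sym2 V)}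
    (hC : ThetaClass G C) :
    ∀ t : ℕ, ∀ u v x y : V, G.Adj u v → s(u, v) ∈ C → u ∈ Hside G v₀ C →
      G.Adj x y → x ∈ Hside G v₀ C → y ∉ Hside G v₀ C → G.dist v y = t → s(x, y) ∈ C := by
  have hc := hmed.conn
  intro t
  induction t using Nat.strong_induction_on with
  | _ t IH =>
  intro u v x y huv hmC hu hxy hx hy hdvy
  have hv : v ∉ Hside G v₀ C := (edge_side hmed v₀ hC huv hmC hu).2
  have hconvH := Hside_convex hmed v₀ hC
  have hconvHc := Hside_compl_convex hmed v₀ hC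
  by_cases hteq : t = 0
  · subst hteq
    have hveq : v = y := dist_zero_eq hc hdvy
    subst hveq
    by_cases hux : u = x
    · subst hux; exact hmC
    · exfalso
      have d1 : G.dist u v = 1 := adj_dist_one huv
      have d2 : G.dist v x = 1 := adj_dist_one hxy.symm
      have hnadj : ¬ G.Adj u x := by
        intro h'
        exact no_equidist hmed h' v (by
          have e1 : G.dist v u = 1 := adj_dist_one huv.symm
          omega)
      have hne1 : G.dist u x ≠ 1 := fun hh => hnadj (SimpleGraph.dist_eq_one_iff_adj.1 hh)
      have hne0 : G.dist u x ≠ 0 := fun hh => hux (dist_zero_eq hc hh)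
      have htri : G.dist u x ≤ G.dist u v + G.dist v x := hc.dist_triangle
      have hdux : G.dist u x = 2 := by omega
      exact hv (hconvH u hu x hx (by rw [mem_interval_iff]; omega))
  · obtain ⟨w, hvw, hwy⟩ := exists_adj_dist hc (u := v) (v := y) (n := t - 1) (by omega)
    have hvwd : G.dist v w = 1 := adj_dist_one hvw
    have hwmem : w ∈ interval G v y := by rw [mem_interval_iff]; omega
    have hw : w ∉ Hside G v₀ C := hconvHc v hv y hy hwmem
    have hduv : G.dist u v = 1 := adj_dist_one huv
    have hdvu : G.dist v u = 1 := adj_dist_one huv.symm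
    have hcuy := adj_dist_cases hmed huv y
    have cyu : G.dist y u = G.dist u y := SimpleGraph.dist_comm
    have cyv : G.dist y v = G.dist v y := SimpleGraph.dist_comm
    have hduy : G.dist u y = t + 1 := by
      rcases hcuy with hh | hh
      · omega
      · exfalso
        exact (hconvHc v hv y hy (by rw [mem_interval_iff]; omega)) hu
    have hnadjuw : ¬ G.Adj u w := by
      intro h'
      exact no_equidist hmed h' v (by
        have e1 : G.dist v w = 1 := adj_dist_one hvw
        omega)
    have hne1 : G.dist u w ≠ 1 := fun hh => hnadjuw (SimpleGraph.dist_eq_one_iff_adj.1 hh)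
    have hne0 : G.dist u w ≠ 0 := by
      intro hh
      rw [dist_zero_eq hc hh] at hu
      exact hw hu
    have htri : G.dist u w ≤ G.dist u v + G.dist v w := hc.dist_triangle
    have hduw : G.dist u w = 2 := by omega
    have htxu : G.dist u y ≤ G.dist u x + G.dist x y := hc.dist_triangle
    have hdxy : G.dist x y = 1 := adj_dist_one hxy
    have htxw : G.dist x w ≤ G.dist x y + G.dist y w := hc.dist_triangle
    have cyw : G.dist y w = G.dist w y := SimpleGraph.dist_comm
    obtain ⟨m, hm1, hm2, hm3⟩ := median_exists hmed u w x
    rw [mem_interval_iff] at hm1 hm2 hm3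
    have cxm : G.dist x m = G.dist m x := SimpleGraph.dist_comm
    have cxu : G.dist x u = G.dist u x := SimpleGraph.dist_comm
    have cwm : G.dist w m = G.dist m w := SimpleGraph.dist_comm
    have cwx : G.dist w x = G.dist x w := SimpleGraph.dist_comm
    have cwu : G.dist w u = G.dist u w := SimpleGraph.dist_comm
    have hmH : m ∈ Hside G v₀ C := hconvH x hx u hu (by rw [mem_interval_iff]; omega)
    have hmw_ne : m ≠ w := by intro he; rw [he] at hmH; exact hw hmH
    have hmu_ne : m ≠ u := by
      intro he
      rw [he] at hm2
      omega
    have hmwne0 : G.dist m w ≠ 0 := fun hh => hmw_ne (dist_zero_eq hc hh)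
    have hmune0 : G.dist u m ≠ 0 := fun hh => hmu_ne (dist_zero_eq hc hh).symm
    have hdum : G.dist u m = 1 := by omega
    have hdmw : G.dist m w = 1 := by omega
    have hadjum : G.Adj u m := SimpleGraph.dist_eq_one_iff_adj.1 hdum
    have hadjmw : G.Adj m w := SimpleGraph.dist_eq_one_iff_adj.1 hdmw
    have hsq : IsSquare G u v m w :=
      ⟨huv, hadjmw, hadjum, hvw, by intro he; rw [he] at hu; exact hw hu,
       by intro he; rw [← he] at hmH; exact hv hmH⟩
    have hmwC : s(m, w) ∈ C :=
      class_closed_theta0 hC hmC ⟨u, v, m, w, hsq, rfl, rfl⟩ hadjmw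
    exact IH (t - 1) (by omega) m w x y hadjmw hmwC hmH hxy hx hy (by omega)

/-- the downward quadrangle condition -/
lemma quadrangle (hmed : MedianGraph G) (v₀ : V) {v u₁ u₂ : V}
    (h1 : G.Adj u₁ v) (h2 : G.Adj u₂ v) (hne : u₁ ≠ u₂)
    (hd1 : G.dist v₀ u₁ + 1 = G.dist v₀ v) (hd2 : G.dist v₀ u₂ + 1 = G.dist v₀ v) :
    ∃ m, G.Adj m u₁ ∧ G.Adj m u₂ ∧ G.dist v₀ m + 1 = G.dist v₀ u₁ ∧ m ≠ v := by
  have hc := hmed.conn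
  have d1 : G.dist u₁ v = 1 := adj_dist_one h1
  have d2 : G.dist v u₂ = 1 := adj_dist_one h2.symm
  have hnadj : ¬ G.Adj u₁ u₂ := fun h' => no_equidist hmed h' v₀ (by omega)
  have hne1 : G.dist u₁ u₂ ≠ 1 := fun hh => hnadj (SimpleGraph.dist_eq_one_iff_adj.1 hh)
  have hne0 : G.dist u₁ u₂ ≠ 0 := fun hh => hne (dist_zero_eq hc hh)
  have htri : G.dist u₁ u₂ ≤ G.dist u₁ v + G.dist v u₂ := hc.dist_triangle
  have hd12 : G.dist u₁ u₂ = 2 := by omega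
  obtain ⟨m, hm1, hm2, hm3⟩ := median_exists hmed u₁ u₂ v₀
  rw [mem_interval_iff] at hm1 hm2 hm3
  have c1 : G.dist u₂ m = G.dist m u₂ := SimpleGraph.dist_comm
  have c2 : G.dist u₂ v₀ = G.dist v₀ u₂ := SimpleGraph.dist_comm
  have c3 : G.dist m u₁ = G.dist u₁ m := SimpleGraph.dist_comm
  have c4 : G.dist m v₀ = G.dist v₀ m := SimpleGraph.dist_comm
  have hmm1 : G.dist u₁ m = 1 := by omega
  have hmm2 : G.dist m u₂ = 1 := by omega
  refine ⟨m, (SimpleGraph.dist_eq_one_iff_adj.1 hmm1).symm,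
    SimpleGraph.dist_eq_one_iff_adj.1 hmm2, by omega, ?_⟩
  intro he
  rw [he] at hm3
  omega

/-- Statement (1): the ingoing classes of every vertex form a POF. -/
lemma inClasses_isPOF (hmed : MedianGraph G) (v₀ v : V) : IsPOF G (inClasses G v₀ v) := by
  refine ⟨fun C hC => hC.1, ?_⟩
  rintro C ⟨hCcl, u₁, h1, hlt1, hm1⟩ C' ⟨hC'cl, u₂, h2, hlt2, hm2⟩ hne
  have hc := hmed.conn
  have hu12 : u₁ ≠ u₂ := by
    intro he
    subst he
    exact hne (theta_class_eq hCcl hC'cl hm1 hm2)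
  have hd1 : G.dist v₀ u₁ + 1 = G.dist v₀ v := by
    have := adj_dist_cases hmed h1 v₀; omega
  have hd2 : G.dist v₀ u₂ + 1 = G.dist v₀ v := by
    have := adj_dist_cases hmed h2 v₀; omega
  obtain ⟨m, hmu1, hmu2, hmd, hmv⟩ := quadrangle hmed v₀ h1 h2 hu12 hd1 hd2
  have sq1 : IsSquare G u₁ v m u₂ :=
    ⟨h1, hmu2, hmu1.symm, h2.symm, hu12, Ne.symm hmv⟩
  have sq2 : IsSquare G u₂ v m u₁ :=
    ⟨h2, hmu1, hmu2.symm, h1.symm, Ne.symm hu12, Ne.symm hmv⟩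
  refine ⟨u₁, v, m, u₂, sq1, hm1,
    class_closed_theta0 hCcl hm1 ⟨u₁, v, m, u₂, sq1, rfl, rfl⟩ hmu2,
    ?_, by rwa [Sym2.eq_swap]⟩
  have hmem : s(m, u₁) ∈ C' :=
    class_closed_theta0 hC'cl hm2 ⟨u₂, v, m, u₁, sq2, rfl, rfl⟩ hmu1
  rwa [Sym2.eq_swap]

/-- gates of convex sets -/
lemma exists_gate (hmed : MedianGraph G) {K : Set V} (hK : K.Nonempty)
    (hconv : ConvexSet G K) (x : V) :
    ∃ g ∈ K, (∀ h ∈ K, G.dist x g ≤ G.dist x h) ∧ ∀ h ∈ K, g ∈ interval G x h := by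
  have hc := hmed.conn
  obtain ⟨g, hgK, hmin⟩ := Set.exists_min_image K (fun w => G.dist x w) (Set.toFinite K) hK
  refine ⟨g, hgK, hmin, fun h hh => ?_⟩
  obtain ⟨m, hm1, hm2, hm3⟩ := median_exists hmed x g h
  have hmK : m ∈ K := hconv g hgK h hh hm2
  have hle := hmin m hmK
  rw [mem_interval_iff] at hm1
  have hmg : G.dist m g = 0 := by omega
  have : m = g := dist_zero_eq hc hmg
  subst this
  exact interval_comm hm3

lemma helly3 (hmed : MedianGraph G) {A B C : Set V} (hA : ConvexSet G A)
    (hB : ConvexSet G B) (hC : ConvexSet G C) (hAB : (A ∩ B).Nonempty)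
    (hBC : (B ∩ C).Nonempty) (hCA : (C ∩ A).Nonempty) : (A ∩ B ∩ C).Nonempty := by
  obtain ⟨x, hxA, hxB⟩ := hAB
  obtain ⟨y, hyB, hyC⟩ := hBC
  obtain ⟨z, hzC, hzA⟩ := hCA
  obtain ⟨m, hm1, hm2, hm3⟩ := median_exists hmed x y z
  exact ⟨m, ⟨hA z hzA x hxA hm3, hB x hxB y hyB hm1⟩, hC y hyC z hzC hm2⟩

lemma mem_foldr_inter {l : List (Set V)} {w : V} :
    w ∈ l.foldr (· ∩ ·) Set.univ ↔ ∀ A ∈ l, w ∈ A := by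
  induction l with
  | nil => simp
  | cons A l ih => simp [ih]

lemma helly_fold (hmed : MedianGraph G) : ∀ n (l : List (Set V)), l.length = n →
    (∀ A ∈ l, ConvexSet G A) → (∀ A ∈ l, ∀ B ∈ l, (A ∩ B).Nonempty) →
    (l.foldr (· ∩ ·) Set.univ).Nonempty := by
  intro n
  induction n using Nat.strong_induction_on with
  | _ n IH =>
  intro l hlen hconv hpair
  match l with
  | [] =>
    obtain ⟨x⟩ := hmed.conn.nonempty
    exact ⟨x, trivial⟩
  | [A] =>
    obtain ⟨x, hx, _⟩ := hpair A (by simp) A (by simp)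
    exact ⟨x, hx, trivial⟩
  | A :: B :: rest =>
    have hres : (((A ∩ B) :: rest).foldr (· ∩ ·) Set.univ).Nonempty := by
      refine IH (rest.length + 1) (by simp at hlen; omega) _ rfl ?_ ?_
      · intro S hS
        rcases List.mem_cons.1 hS with rfl | hS
        · exact convex_inter (hconv A (by simp)) (hconv B (by simp))
        · exact hconv S (by simp [hS])
      · intro S hS T hT
        rcases List.mem_cons.1 hS with rfl | hS <;> rcases List.mem_cons.1 hT with rfl | hT
        · obtain ⟨x, hx⟩ := hpair A (by simp) B (by simp)
          exact ⟨x, hx, hx⟩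
        · have h3 := helly3 hmed (hconv A (by simp)) (hconv B (by simp))
            (hconv T (by simp [hT]))
            (hpair A (by simp) B (by simp)) (hpair B (by simp) T (by simp [hT]))
            (hpair T (by simp [hT]) A (by simp))
          obtain ⟨x, ⟨hx1, hx2⟩, hx3⟩ := h3
          exact ⟨x, ⟨hx1, hx2⟩, hx3⟩
        · have h3 := helly3 hmed (hconv A (by simp)) (hconv B (by simp))
            (hconv S (by simp [hS]))
            (hpair A (by simp) B (by simp)) (hpair B (by simp) S (by simp [hS]))
            (hpair S (by simp [hS]) A (by simp))
          obtain ⟨x, ⟨hx1, hx2⟩, hx3⟩ := h3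
          exact ⟨x, hx3, hx1, hx2⟩
        · exact hpair S (by simp [hS]) T (by simp [hT])
    obtain ⟨x, hx⟩ := hres
    rw [mem_foldr_inter] at hx
    refine ⟨x, ?_⟩
    rw [mem_foldr_inter]
    intro S hS
    rcases List.mem_cons.1 hS with rfl | hS
    · exact (hx (S ∩ B) (by simp)).1
    · rcases List.mem_cons.1 hS with rfl | hS
      · exact (hx (A ∩ S) (by simp)).2
      · exact hx S (by simp [hS])


set_option maxHeartbeats 1000000 in
/-- key lemma for injectivity and minimality -/
lemma inClasses_subset_interval (hmed : MedianGraph G) (v₀ : V) {v w : V}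
    (hsub : inClasses G v₀ v ⊆ inClasses G v₀ w) : v ∈ interval G v₀ w := by
  have hc := hmed.conn
  obtain ⟨m, hm1, hm2, hm3⟩ := median_exists hmed v₀ v w
  by_cases hmv : m = v
  · subst hmv; exact interval_comm hm3
  · exfalso
    rw [mem_interval_iff] at hm1 hm2 hm3
    have hvm0 : G.dist v m ≠ 0 := fun h0 => hmv (dist_zero_eq hc h0).symm
    obtain ⟨u', hvu', hu'm⟩ := exists_adj_dist hc (u := v) (v := m) (n := G.dist v m - 1)
      (by omega)
    have hdvu' : G.dist v u' = 1 := adj_dist_one hvu'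
    have hdu'v : G.dist u' v = 1 := adj_dist_one hvu'.symm
    have cmv : G.dist m v = G.dist v m := SimpleGraph.dist_comm
    have cmu' : G.dist m u' = G.dist u' m := SimpleGraph.dist_comm
    have t1 : G.dist v₀ u' ≤ G.dist v₀ m + G.dist m u' := hc.dist_triangle
    have t2 : G.dist v₀ v ≤ G.dist v₀ u' + G.dist u' v := hc.dist_triangle
    have hd : G.dist v₀ u' + 1 = G.dist v₀ v := by omega
    -- u' ∈ I(v,w)
    have t3 : G.dist u' w ≤ G.dist u' m + G.dist m w := hc.dist_triangle
    have t4 : G.dist v w ≤ G.dist v u' + G.dist u' w := hc.dist_triangle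
    have hu'w : 1 + G.dist u' w = G.dist v w := by omega
    -- the class of the edge (u', v)
    have he : s(u', v) ∈ G.edgeSet := hvu'.symm
    obtain ⟨hCcl, hCe⟩ := edge_class (G := G) he
    have hCin : {f | Theta G s(u', v) f} ∈ inClasses G v₀ v :=
      ⟨hCcl, u', hvu'.symm, by omega, hCe⟩
    obtain ⟨_, w', hadjw', hltw', hmemw'⟩ := hsub hCin
    have hs2 := edge_side' hmed v₀ hCcl hadjw' hmemw' hltw'
    -- w is in Hside of this class (it is closer to u' than to v)
    have hspec := Hside_spec hmed v₀ hCcl hvu'.symm hCe (by omega)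
    have hwin : w ∈ Wset G u' v := by
      rw [mem_Wset_iff]
      have c1 : G.dist w u' = G.dist u' w := SimpleGraph.dist_comm
      have c2 : G.dist w v = G.dist v w := SimpleGraph.dist_comm
      omega
    rw [hspec] at hwin
    exact hs2.2 hwin

lemma inClasses_subset_le (hmed : MedianGraph G) (v₀ : V) {v w : V}
    (hsub : inClasses G v₀ v ⊆ inClasses G v₀ w) : G.dist v₀ v ≤ G.dist v₀ w := by
  have h := inClasses_subset_interval hmed v₀ hsub
  rw [mem_interval_iff] at h
  omega

lemma inClasses_inj (hmed : MedianGraph G) (v₀ : V) {v w : V}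
    (heq : inClasses G v₀ v = inClasses G v₀ w) : v = w := by
  have h1 := inClasses_subset_interval hmed v₀ (le_of_eq heq)
  have h2 := inClasses_subset_interval hmed v₀ (le_of_eq heq.symm)
  rw [mem_interval_iff] at h1 h2
  have c1 : G.dist w v = G.dist v w := SimpleGraph.dist_comm
  have h0 : G.dist v w = 0 := by omega
  exact dist_zero_eq hmed.conn h0

set_option maxHeartbeats 1000000 in
/-- from orthogonality: any two quarters of two distinct classes intersect -/
lemma quadrants (hmed : MedianGraph G) (v₀ : V) {C D : Set (Sym2 V)}
    (hC : ThetaClass G C) (hD : ThetaClass G D) (horth : Orthogonal G C D)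
    (P Q : Set V) (hP : P = Hside G v₀ C ∨ P = (Hside G v₀ C)ᶜ)
    (hQ : Q = Hside G v₀ D ∨ Q = (Hside G v₀ D)ᶜ) : (P ∩ Q).Nonempty := by
  obtain ⟨u, v, x, y, hsq, h1, h2, h3, h4⟩ := horth
  have hc := hmed.conn
  obtain ⟨huv, hxy, hux, hvy, huy, hvx⟩ := hsq
  have equv : Wset G u v = Wset G x y := square_cut_Wset hmed ⟨huv, hxy, hux, hvy, huy, hvx⟩
  have eqvu : Wset G v u = Wset G y x :=
    square_cut_Wset hmed (IsSquare.rev ⟨huv, hxy, hux, hvy, huy, hvx⟩)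
  have equx : Wset G u x = Wset G v y :=
    square_cut_Wset hmed (IsSquare.sides ⟨huv, hxy, hux, hvy, huy, hvx⟩)
  have eqxu : Wset G x u = Wset G y v :=
    square_cut_Wset hmed (IsSquare.rev (IsSquare.sides ⟨huv, hxy, hux, hvy, huy, hvx⟩))
  -- the two sides of C among {Wset u v, Wset v u}
  have hCpair : (Hside G v₀ C = Wset G u v ∧ (Hside G v₀ C)ᶜ = Wset G v u) ∨
      (Hside G v₀ C = Wset G v u ∧ (Hside G v₀ C)ᶜ = Wset G u v) := by
    rcases adj_dist_cases hmed huv v₀ with hh | hh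
    · right
      have hspec := Hside_spec hmed v₀ hC huv.symm (by rwa [Sym2.eq_swap]) (by omega)
      constructor
      · exact hspec.symm
      · rw [← hspec, Hside_compl_Wset hmed huv.symm]
    · left
      have hspec := Hside_spec hmed v₀ hC huv h1 (by omega)
      constructor
      · exact hspec.symm
      · rw [← hspec, Hside_compl_Wset hmed huv]
  have hDpair : (Hside G v₀ D = Wset G u x ∧ (Hside G v₀ D)ᶜ = Wset G x u) ∨
      (Hside G v₀ D = Wset G x u ∧ (Hside G v₀ D)ᶜ = Wset G u x) := by
    rcases adj_dist_cases hmed hux v₀ with hh | hh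
    · right
      have hspec := Hside_spec hmed v₀ hD hux.symm (by rwa [Sym2.eq_swap]) (by omega)
      constructor
      · exact hspec.symm
      · rw [← hspec, Hside_compl_Wset hmed hux.symm]
    · left
      have hspec := Hside_spec hmed v₀ hD hux h3 (by omega)
      constructor
      · exact hspec.symm
      · rw [← hspec, Hside_compl_Wset hmed hux]
  have hP' : P = Wset G u v ∨ P = Wset G v u := by
    rcases hCpair with ⟨e1, e2⟩ | ⟨e1, e2⟩ <;> rcases hP with rfl | rfl <;>
      first | exact Or.inl e1 | exact Or.inr e2 | exact Or.inr e1 | exact Or.inl e2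
  have hQ' : Q = Wset G u x ∨ Q = Wset G x u := by
    rcases hDpair with ⟨e1, e2⟩ | ⟨e1, e2⟩ <;> rcases hQ with rfl | rfl <;>
      first | exact Or.inl e1 | exact Or.inr e2 | exact Or.inr e1 | exact Or.inl e2
  -- memberships of the four corners
  have mu_uv : u ∈ Wset G u v := by
    rw [mem_Wset_iff]
    have e0 : G.dist u u = 0 := SimpleGraph.dist_self
    have e1 : G.dist u v = 1 := adj_dist_one huv
    omega
  have mv_vu : v ∈ Wset G v u := by
    rw [mem_Wset_iff]
    have e0 : G.dist v v = 0 := SimpleGraph.dist_self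
    have e1 : G.dist v u = 1 := adj_dist_one huv.symm
    omega
  have mx_uv : x ∈ Wset G u v := by
    rw [equv, mem_Wset_iff]
    have e0 : G.dist x x = 0 := SimpleGraph.dist_self
    have e1 : G.dist x y = 1 := adj_dist_one hxy
    omega
  have my_vu : y ∈ Wset G v u := by
    rw [eqvu, mem_Wset_iff]
    have e0 : G.dist y y = 0 := SimpleGraph.dist_self
    have e1 : G.dist y x = 1 := adj_dist_one hxy.symm
    omega
  have mu_ux : u ∈ Wset G u x := by
    rw [mem_Wset_iff]
    have e0 : G.dist u u = 0 := SimpleGraph.dist_self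
    have e1 : G.dist u x = 1 := adj_dist_one hux
    omega
  have mx_xu : x ∈ Wset G x u := by
    rw [mem_Wset_iff]
    have e0 : G.dist x x = 0 := SimpleGraph.dist_self
    have e1 : G.dist x u = 1 := adj_dist_one hux.symm
    omega
  have mv_ux : v ∈ Wset G u x := by
    rw [equx, mem_Wset_iff]
    have e0 : G.dist v v = 0 := SimpleGraph.dist_self
    have e1 : G.dist v y = 1 := adj_dist_one hvy
    omega
  have my_xu : y ∈ Wset G x u := by
    rw [eqxu, mem_Wset_iff]
    have e0 : G.dist y y = 0 := SimpleGraph.dist_self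
    have e1 : G.dist y v = 1 := adj_dist_one hvy.symm
    omega
  rcases hP' with rfl | rfl <;> rcases hQ' with rfl | rfl
  · exact ⟨u, mu_uv, mu_ux⟩
  · exact ⟨x, mx_uv, mx_xu⟩
  · exact ⟨v, mv_vu, mv_ux⟩
  · exact ⟨y, my_vu, my_xu⟩


lemma Hside_nonempty (hmed : MedianGraph G) (v₀ : V) {C : Set (Sym2 V)}
    (hC : ThetaClass G C) : (Hside G v₀ C).Nonempty := ⟨v₀, Hside_base hmed v₀ hC⟩

lemma Hside_compl_nonempty (hmed : MedianGraph G) (v₀ : V) {C : Set (Sym2 V)}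
    (hC : ThetaClass G C) : ((Hside G v₀ C)ᶜ).Nonempty := by
  obtain ⟨u, v, huv, hm, hlt⟩ := class_oriented_edge hmed v₀ hC
  exact ⟨v, (edge_side' hmed v₀ hC huv hm hlt).2⟩

/-- Helly property for a family of sides indexed by a POF -/
lemma pof_inter (hmed : MedianGraph G) (v₀ : V) {X : Set (Set (Sym2 V))} (hX : IsPOF G X)
    (f : Set (Sym2 V) → Set V)
    (hf : ∀ C ∈ X, f C = Hside G v₀ C ∨ f C = (Hside G v₀ C)ᶜ) :
    ∃ z : V, ∀ C ∈ X, z ∈ f C := by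
  classical
  have hfin : X.Finite := Set.toFinite X
  set l := hfin.toFinset.toList.map f with hl
  have hmem : ∀ A ∈ l, ∃ C ∈ X, A = f C := by
    intro A hA
    rw [hl, List.mem_map] at hA
    obtain ⟨C, hC, rfl⟩ := hA
    exact ⟨C, hfin.mem_toFinset.1 (Finset.mem_toList.1 hC), rfl⟩
  have hconv : ∀ A ∈ l, ConvexSet G A := by
    intro A hA
    obtain ⟨C, hCX, rfl⟩ := hmem A hA
    rcases hf C hCX with he | he <;> rw [he]
    · exact Hside_convex hmed v₀ (hX.1 C hCX)
    · exact Hside_compl_convex hmed v₀ (hX.1 C hCX)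
  have hpair : ∀ A ∈ l, ∀ B ∈ l, (A ∩ B).Nonempty := by
    intro A hA B hB
    obtain ⟨C, hCX, rfl⟩ := hmem A hA
    obtain ⟨D, hDX, rfl⟩ := hmem B hB
    by_cases hCD : C = D
    · subst hCD
      have hne : (f C).Nonempty := by
        rcases hf C hCX with he | he <;> rw [he]
        · exact Hside_nonempty hmed v₀ (hX.1 C hCX)
        · exact Hside_compl_nonempty hmed v₀ (hX.1 C hCX)
      obtain ⟨z, hz⟩ := hne
      exact ⟨z, hz, hz⟩
    · exact quadrants hmed v₀ (hX.1 C hCX) (hX.1 D hDX) (hX.2 C hCX D hDX hCD)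
        (f C) (f D) (hf C hCX) (hf D hDX)
  obtain ⟨z, hz⟩ := helly_fold hmed l.length l rfl hconv hpair
  rw [mem_foldr_inter] at hz
  refine ⟨z, fun C hC => hz (f C) ?_⟩
  rw [hl, List.mem_map]
  exact ⟨C, Finset.mem_toList.2 (hfin.mem_toFinset.2 hC), rfl⟩

set_option maxHeartbeats 1000000 in
/-- Surjectivity: every POF is the ingoing class set of some vertex. -/
lemma inClasses_surj (hmed : MedianGraph G) (v₀ : V) {X : Set (Set (Sym2 V))}
    (hX : IsPOF G X) : ∃ v : V, inClasses G v₀ v = X := by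
  classical
  have hc := hmed.conn
  set K : Set V := {w | ∀ C ∈ X, w ∈ (Hside G v₀ C)ᶜ} with hK
  have hKconv : ConvexSet G K := by
    intro x hx z hz w hw C hC
    exact Hside_compl_convex hmed v₀ (hX.1 C hC) x (hx C hC) z (hz C hC) hw
  have hKne : K.Nonempty := by
    obtain ⟨z, hz⟩ := pof_inter hmed v₀ hX (fun C => (Hside G v₀ C)ᶜ) (fun C _ => Or.inr rfl)
    exact ⟨z, hz⟩
  obtain ⟨v, hvK, hvmin, hvgate⟩ := exists_gate hmed hKne hKconv v₀
  refine ⟨v, Set.Subset.antisymm ?_ ?_⟩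
  · -- inClasses ⊆ X
    rintro C' ⟨hC'cl, u, huv, hult, humem⟩
    by_cases hall : ∀ C ∈ X, u ∈ (Hside G v₀ C)ᶜ
    · exfalso
      have := hvmin u hall
      omega
    · push_neg at hall
      obtain ⟨C, hCX, huH⟩ := hall
      rw [Set.notMem_compl_iff] at huH
      have hCcl := hX.1 C hCX
      have hvH : v ∈ (Hside G v₀ C)ᶜ := hvK C hCX
      obtain ⟨a, b, hab, habC, hablt⟩ := class_oriented_edge hmed v₀ hCcl
      have haH := (edge_side' hmed v₀ hCcl hab habC hablt).1
      have huvC : s(u, v) ∈ C :=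
        cross_edge_mem hmed v₀ hCcl (G.dist b v) a b u v hab habC haH huv huH hvH rfl
      rw [theta_class_eq hC'cl hCcl humem huvC]
      exact hCX
  · -- X ⊆ inClasses
    intro C hCX
    have hCcl := hX.1 C hCX
    obtain ⟨a, b, hab, habC, hablt⟩ := class_oriented_edge hmed v₀ hCcl
    have haH := (edge_side' hmed v₀ hCcl hab habC hablt).1
    set B : Set V := {w | w ∈ Hside G v₀ C ∧ ∀ D ∈ X, D ≠ C → w ∈ (Hside G v₀ D)ᶜ}
      with hB
    have hBconv : ConvexSet G B := by
      intro x hx z hz w hw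
      refine ⟨Hside_convex hmed v₀ hCcl x hx.1 z hz.1 hw, fun D hD hne => ?_⟩
      exact Hside_compl_convex hmed v₀ (hX.1 D hD) x (hx.2 D hD hne) z (hz.2 D hD hne) hw
    have hBne : B.Nonempty := by
      obtain ⟨z, hz⟩ := pof_inter hmed v₀ hX
        (fun D => if D = C then Hside G v₀ D else (Hside G v₀ D)ᶜ)
        (fun D _ => by by_cases hDC : D = C <;> simp [hDC])
      refine ⟨z, ?_, fun D hD hne => ?_⟩
      · have := hz C hCX
        rwa [if_pos rfl] at this
      · have := hz D hD
        rwa [if_neg hne] at this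
    obtain ⟨g, hgB, hgmin, hggate⟩ := exists_gate hmed hBne hBconv v
    have hgH : g ∈ Hside G v₀ C := hgB.1
    have hvH : v ∈ (Hside G v₀ C)ᶜ := hvK C hCX
    have hvg0 : G.dist v g ≠ 0 := by
      intro h0
      rw [dist_zero_eq hc h0] at hvH
      exact hvH hgH
    have cgv : G.dist g v = G.dist v g := SimpleGraph.dist_comm
    by_cases hvg1 : G.dist v g = 1
    · -- g is the ingoing C-neighbor of v
      have hadj : G.Adj g v := SimpleGraph.dist_eq_one_iff_adj.1 (by omega)
      have hgvC : s(g, v) ∈ C :=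
        cross_edge_mem hmed v₀ hCcl (G.dist b v) a b g v hab habC haH hadj hgH hvH rfl
      exact ⟨hCcl, g, hadj, (edge_side hmed v₀ hCcl hadj hgvC hgH).1, hgvC⟩
    · -- impossible: the gate of v in B is at distance ≥ 2
      exfalso
      obtain ⟨q, hgq, hqv⟩ := exists_adj_dist hc (u := g) (v := v) (n := G.dist v g - 1)
        (by omega)
      have hdgq : G.dist g q = 1 := adj_dist_one hgq
      have cqg : G.dist q g = 1 := adj_dist_one hgq.symm
      have cvq : G.dist v q = G.dist q v := SimpleGraph.dist_comm
      have hqI : q ∈ interval G v g := by rw [mem_interval_iff]; omega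
      have hqD : ∀ D ∈ X, D ≠ C → q ∈ (Hside G v₀ D)ᶜ := fun D hD hne =>
        Hside_compl_convex hmed v₀ (hX.1 D hD) v (hvK D hD) g (hgB.2 D hD hne) hqI
      have hqC : q ∈ (Hside G v₀ C)ᶜ := by
        by_contra hqC
        rw [Set.notMem_compl_iff] at hqC
        have hqB : q ∈ B := ⟨hqC, hqD⟩
        have := hgmin q hqB
        omega
      have hqK : q ∈ K := by
        intro D hD
        by_cases hne : D = C
        · subst hne; exact hqC
        · exact hqD D hD hne
      have hvq := hvgate q hqK
      rw [mem_interval_iff] at hvq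
      have hgqC : s(g, q) ∈ C :=
        cross_edge_mem hmed v₀ hCcl (G.dist b q) a b g q hab habC haH hgq hgH hqC rfl
      have hlt := (edge_side hmed v₀ hCcl hgq hgqC hgH).1
      have hcases := adj_dist_cases hmed hgq v₀
      obtain ⟨M, hm1, hm2, hm3⟩ := median_exists hmed v₀ v g
      by_cases hMC : M ∈ Hside G v₀ C
      · have hMB : M ∈ B := ⟨hMC, fun D hD hne =>
          Hside_compl_convex hmed v₀ (hX.1 D hD) v (hvK D hD) g (hgB.2 D hD hne) hm2⟩
        have hgM := hggate M hMB
        rw [mem_interval_iff] at hgM hm2 hm1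
        have cMg : G.dist M g = G.dist g M := SimpleGraph.dist_comm
        have hMg0 : G.dist M g = 0 := by omega
        have hMg : M = g := dist_zero_eq hc hMg0
        subst hMg
        omega
      · have hMK : M ∈ K := by
          intro D hD
          by_cases hne : D = C
          · subst hne; exact hMC
          · exact Hside_compl_convex hmed v₀ (hX.1 D hD) v (hvK D hD) g
              (hgB.2 D hD hne) hm2
        have := hvmin M hMK
        rw [mem_interval_iff] at hm1 hm3
        have hMv0 : G.dist M v = 0 := by omega
        have hMv : M = v := dist_zero_eq hc hMv0
        subst hMv
        have c1 : G.dist g M = G.dist M g := SimpleGraph.dist_comm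
        have c2 : G.dist M v₀ = G.dist v₀ M := SimpleGraph.dist_comm
        have c3 : G.dist g v₀ = G.dist v₀ g := SimpleGraph.dist_comm
        have c4 : G.dist q M = G.dist M q := SimpleGraph.dist_comm
        omega

end Aux

/-- In a median graph with basepoint `v₀`, the map `v ↦ ℰ⁻(v)` is a
bijection from the vertex set onto the set of POFs; in particular the number of
POFs equals the number of vertices, and for every POF `X` the unique vertex `v`
with `ℰ⁻(v) = X` is the closest-to-`v₀` vertex `w` with `X ⊆ ℰ⁻(w)`. -/
theorem inClasses_bijection_pofs {V : Type*} [Fintype V] (G : SimpleGraph V)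
    (hmed : MedianGraph G) (v₀ : V) :
    (∀ v : V, IsPOF G (inClasses G v₀ v)) ∧
    Set.BijOn (fun v => inClasses G v₀ v) Set.univ {X | IsPOF G X} ∧
    {X : Set (Set (Sym2 V)) | IsPOF G X}.ncard = Fintype.card V ∧
    (∀ X : Set (Set (Sym2 V)), IsPOF G X → ∀ v, inClasses G v₀ v = X →
      ∀ w, X ⊆ inClasses G v₀ w → G.dist v₀ v ≤ G.dist v₀ w) := by
  have hbij : Set.BijOn (fun v => inClasses G v₀ v) Set.univ {X | IsPOF G X} := by
    refine ⟨fun v _ => inClasses_isPOF hmed v₀ v,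
      fun v _ w _ h => inClasses_inj hmed v₀ h, fun X hX => ?_⟩
    obtain ⟨v, hv⟩ := inClasses_surj hmed v₀ hX
    exact ⟨v, Set.mem_univ v, hv⟩
  refine ⟨inClasses_isPOF hmed v₀, hbij, ?_, ?_⟩
  · calc {X : Set (Set (Sym2 V)) | IsPOF G X}.ncard
        = ((fun v => inClasses G v₀ v) '' Set.univ).ncard := by rw [hbij.image_eq]
      _ = (Set.univ : Set V).ncard := Set.ncard_image_of_injOn hbij.injOn
      _ = Fintype.card V := by rw [Set.ncard_univ, Nat.card_eq_fintype_card]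
  · intro X hX v hv w hsub
    refine inClasses_subset_le hmed v₀ ?_
    rw [hv]
    exact hsub

end MedianPaper
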